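/- Fix β > 0, 𝔇 > 0, m > 0, and set ε(p) = √(m² + p²), v(p) = p/ε(p). Let f : ℝ³ → ℝ be C² in a neighborhood of a point (t₀,x₀,p₀) with f > 0 on that neighborhood, and suppose f satisfies the Vlasov–Fokker–Planck equation ∂_t f + v(p) ∂_x f = (1/(β²𝔇)) ∂_p(∂_p f + β v f) at (t₀,x₀,p₀). Define s(t,x,p) = f(t,x,p) · (β ε(p) + log f(t,x,p) − 1) and λ(t,x,p) = (∂_p f)(t,x,p) + β v(p) f(t,x,p). Then at (t₀,x₀,p₀): ∂_t s + v(p) ∂_x s = (1/(β²𝔇)) · ∂_p[ (β ε(p) + log f) · λ ] − (1/(β²𝔇)) · λ² / f, where ∂_p in the first term on the right is the derivative at p₀ of q ↦ (β ε(q) + log f(t₀,x₀,q)) · λ(t₀,x₀,q). -/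

import Mathlib

open MeasureTheory

/-- Relativistic energy `ε(p) = √(m² + p²)`. -/
noncomputable def eps (m p : ℝ) : ℝ := Real.sqrt (m ^ 2 + p ^ 2)

/-- Relativistic velocity `v(p) = p/ε(p)`. -/
noncomputable def vel (m p : ℝ) : ℝ := p / eps m p

/-- the pointwise entropy-production identity. If `f > 0` is `C²` on a
neighborhood of `(t₀,x₀,p₀)` and satisfies the Vlasov–Fokker–Planck equation there, then
with `s = f(βε + log f − 1)` and `λ = ∂_p f + βvf` one has, at `(t₀,x₀,p₀)`,
`∂_t s + v ∂_x s = (β²𝔇)⁻¹ ∂_p[(βε + log f) λ] − (β²𝔇)⁻¹ λ²/f`. -/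
theorem entropy_production_identity (m β D : ℝ) (hm : 0 < m) (hβ : 0 < β) (hD : 0 < D)
    (f : ℝ → ℝ → ℝ → ℝ) (t₀ x₀ p₀ : ℝ)
    (U : Set (ℝ × ℝ × ℝ)) (hU : U ∈ nhds (t₀, x₀, p₀))
    (hC2 : ContDiffOn ℝ 2 (fun q : ℝ × ℝ × ℝ => f q.1 q.2.1 q.2.2) U)
    (hpos : ∀ q ∈ U, 0 < f q.1 q.2.1 q.2.2)
    (hVFP : deriv (fun t : ℝ => f t x₀ p₀) t₀
        + vel m p₀ * deriv (fun x : ℝ => f t₀ x p₀) x₀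
      = (1 / (β ^ 2 * D)) *
          deriv (fun q : ℝ => deriv (fun r : ℝ => f t₀ x₀ r) q
            + β * vel m q * f t₀ x₀ q) p₀) :
    deriv (fun t : ℝ => f t x₀ p₀ * (β * eps m p₀ + Real.log (f t x₀ p₀) - 1)) t₀
      + vel m p₀ *
        deriv (fun x : ℝ => f t₀ x p₀ * (β * eps m p₀ + Real.log (f t₀ x p₀) - 1)) x₀
    = (1 / (β ^ 2 * D)) *
        deriv (fun q : ℝ => (β * eps m q + Real.log (f t₀ x₀ q)) *
          (deriv (fun r : ℝ => f t₀ x₀ r) q + β * vel m q * f t₀ x₀ q)) p₀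
      - (1 / (β ^ 2 * D)) *
          (deriv (fun r : ℝ => f t₀ x₀ r) p₀ + β * vel m p₀ * f t₀ x₀ p₀) ^ 2
            / f t₀ x₀ p₀ := by
  -- abbreviations
  set F : ℝ → ℝ := fun r => f t₀ x₀ r with hFdef
  have hfp : 0 < f t₀ x₀ p₀ := hpos _ (mem_of_mem_nhds hU)
  have hfne : f t₀ x₀ p₀ ≠ 0 := ne_of_gt hfp
  -- eps facts
  have hepos : 0 < eps m p₀ := Real.sqrt_pos.2 (by positivity)
  have hεd : HasDerivAt (eps m) (vel m p₀) p₀ := by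
    have h1 : HasDerivAt (fun p : ℝ => m ^ 2 + p ^ 2) (2 * p₀) p₀ := by
      simpa using ((hasDerivAt_pow 2 p₀).const_add (m ^ 2))
    have := h1.sqrt (by positivity)
    convert this using 1
    · rfl
    rw [vel, eps]
    field_simp
  have hveld : DifferentiableAt ℝ (vel m) p₀ := by
    exact (differentiableAt_id.div hεd.differentiableAt (ne_of_gt hepos))
  -- contDiffAt of the full function
  have hct : ContDiffAt ℝ 2 (fun q : ℝ × ℝ × ℝ => f q.1 q.2.1 q.2.2) (t₀, x₀, p₀) :=
    hC2.contDiffAt hU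
  -- one-variable restrictions
  have hG : ContDiffAt ℝ 2 (fun t => f t x₀ p₀) t₀ := by
    have : ContDiffAt ℝ 2 (fun t : ℝ => ((t, x₀, p₀) : ℝ × ℝ × ℝ)) t₀ :=
      (ContDiffAt.prodMk contDiffAt_id (ContDiffAt.prodMk contDiffAt_const contDiffAt_const))
    exact hct.comp t₀ this
  have hH : ContDiffAt ℝ 2 (fun x => f t₀ x p₀) x₀ := by
    have : ContDiffAt ℝ 2 (fun x : ℝ => ((t₀, x, p₀) : ℝ × ℝ × ℝ)) x₀ :=
      (ContDiffAt.prodMk contDiffAt_const (ContDiffAt.prodMk contDiffAt_id contDiffAt_const))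
    exact hct.comp x₀ this
  have hFc : ContDiffAt ℝ 2 F p₀ := by
    have : ContDiffAt ℝ 2 (fun p : ℝ => ((t₀, x₀, p) : ℝ × ℝ × ℝ)) p₀ :=
      (ContDiffAt.prodMk contDiffAt_const (ContDiffAt.prodMk contDiffAt_const contDiffAt_id))
    exact ContDiffAt.comp (g := fun q : ℝ × ℝ × ℝ => f q.1 q.2.1 q.2.2) p₀ hct this
  have hGd : DifferentiableAt ℝ (fun t => f t x₀ p₀) t₀ := hG.differentiableAt two_ne_zero
  have hHd : DifferentiableAt ℝ (fun x => f t₀ x p₀) x₀ := hH.differentiableAt two_ne_zero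
  have hFd : DifferentiableAt ℝ F p₀ := hFc.differentiableAt two_ne_zero
  -- derivative of F is differentiable
  have hF'd : DifferentiableAt ℝ (deriv F) p₀ := by
    obtain ⟨u, hu, hcu⟩ := hFc.contDiffOn le_rfl (by norm_num)
    obtain ⟨v, hvu, hvo, hvmem⟩ := mem_nhds_iff.1 hu
    have : ContDiffOn ℝ 1 (deriv F) v :=
      (hcu.mono hvu).deriv_of_isOpen hvo (by norm_num)
    exact (this.differentiableOn one_ne_zero).differentiableAt (hvo.mem_nhds hvmem)
  -- lambda
  set Λ : ℝ → ℝ := fun q => deriv F q + β * vel m q * F q with hΛdef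
  have hΛd : DifferentiableAt ℝ Λ p₀ :=
    hF'd.add (((differentiableAt_const β).mul hveld).mul hFd)
  -- derivatives
  have hG' : HasDerivAt (fun t => f t x₀ p₀) (deriv (fun t => f t x₀ p₀) t₀) t₀ :=
    hGd.hasDerivAt
  have hH' : HasDerivAt (fun x => f t₀ x p₀) (deriv (fun x => f t₀ x p₀) x₀) x₀ :=
    hHd.hasDerivAt
  set a := deriv (fun t => f t x₀ p₀) t₀
  set b := deriv (fun x => f t₀ x p₀) x₀
  set C := β * eps m p₀
  set L := Real.log (f t₀ x₀ p₀)
  -- t-derivative of s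
  have hst : deriv (fun t : ℝ => f t x₀ p₀ * (β * eps m p₀ + Real.log (f t x₀ p₀) - 1)) t₀
      = a * (C + L) := by
    have h1 : HasDerivAt (fun t : ℝ => β * eps m p₀ + Real.log (f t x₀ p₀) - 1)
        (a / f t₀ x₀ p₀) t₀ := by
      simpa using (((hG'.log hfne).const_add (β * eps m p₀)).sub_const 1)
    have h2 := hG'.fun_mul h1
    rw [h2.deriv]
    field_simp [C, L]
    ring
  have hsx : deriv (fun x : ℝ => f t₀ x p₀ * (β * eps m p₀ + Real.log (f t₀ x p₀) - 1)) x₀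
      = b * (C + L) := by
    have h1 : HasDerivAt (fun x : ℝ => β * eps m p₀ + Real.log (f t₀ x p₀) - 1)
        (b / f t₀ x₀ p₀) x₀ := by
      simpa using (((hH'.log hfne).const_add (β * eps m p₀)).sub_const 1)
    have h2 := hH'.fun_mul h1
    rw [h2.deriv]
    field_simp [C, L]
    ring
  -- p-derivative on the RHS
  set Λ' := deriv Λ p₀
  have hΛ' : HasDerivAt Λ Λ' p₀ := hΛd.hasDerivAt
  have hF' : HasDerivAt F (deriv F p₀) p₀ := hFd.hasDerivAt
  have h1 : HasDerivAt (fun q : ℝ => β * eps m q + Real.log (F q))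
      (β * vel m p₀ + deriv F p₀ / f t₀ x₀ p₀) p₀ :=
    ((hεd.const_mul β).add (hF'.log hfne))
  have h2 := h1.mul hΛ'
  have hrhs : deriv (fun q : ℝ => (β * eps m q + Real.log (f t₀ x₀ q)) *
        (deriv (fun r : ℝ => f t₀ x₀ r) q + β * vel m q * f t₀ x₀ q)) p₀
      = (β * vel m p₀ + deriv F p₀ / f t₀ x₀ p₀) * Λ p₀ + (C + L) * Λ' := h2.deriv
  -- hVFP rewrite
  have hVFP' : a + vel m p₀ * b = (1 / (β ^ 2 * D)) * Λ' := hVFP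
  rw [hst, hsx, hrhs]
  have hΛp : Λ p₀ = deriv F p₀ + β * vel m p₀ * f t₀ x₀ p₀ := rfl
  have h3 : (β * vel m p₀ + deriv F p₀ / f t₀ x₀ p₀) * Λ p₀
      = (deriv F p₀ + β * vel m p₀ * f t₀ x₀ p₀) ^ 2 / f t₀ x₀ p₀ := by
    rw [hΛp]; field_simp; ring
  rw [h3]
  linear_combination (C + L) * hVFP'
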